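/- For the Holt potential Hamiltonian H = (p₁² + p₂²)/2 + (q₁² + 4q₂²)/2 + δ/q₁² with δ > 0, the function Θ = (i/2)·log(2δ/q₁² − 2i q₁p₁ + p₁² − q₁²) − (1/2)·arctan(2q₂/p₂), viewed via its real-analytic expression (e.g., the imaginary part of the complex logarithm is the phase), has vanishing Poisson bracket with H on the open set q₁ ≠ 0, p₂ ≠ 0 where it is defined. Equivalently: the derivative of Θ along the Hamiltonian vector field of H vanishes. -/

import Mathlib

/-- Canonical Poisson bracket on ℝ⁴ in coordinates (q₁, q₂, p₁, p₂). -/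
noncomputable def poissonBracket (F G : ℝ → ℝ → ℝ → ℝ → ℝ) (q1 q2 p1 p2 : ℝ) : ℝ :=
  deriv (fun x => F x q2 p1 p2) q1 * deriv (fun x => G q1 q2 x p2) p1
  - deriv (fun x => F q1 q2 x p2) p1 * deriv (fun x => G x q2 p1 p2) q1
  + deriv (fun x => F q1 x p1 p2) q2 * deriv (fun x => G q1 q2 p1 x) p2
  - deriv (fun x => F q1 q2 p1 x) p2 * deriv (fun x => G q1 x p1 p2) q2

/-- The complex quantity appearing in the Holt-potential first integral:
w = 2δ/q₁² − 2i q₁p₁ + p₁² − q₁². -/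
noncomputable def holtW (δ q1 p1 : ℝ) : ℂ :=
  (2 * δ / q1 ^ 2 : ℝ) - 2 * Complex.I * (q1 : ℂ) * (p1 : ℂ)
    + (p1 : ℝ) ^ 2 - (q1 : ℝ) ^ 2

section HoltAux

lemma hasDerivAt_ofReal' (x : ℝ) : HasDerivAt (fun t : ℝ => (t:ℂ)) 1 x := by
  exact Complex.ofRealCLM.hasDerivAt

lemma holtW_hasDerivAt_q (δ p1 : ℝ) {q1 : ℝ} (hq1 : q1 ≠ 0) :
    HasDerivAt (fun x : ℝ => holtW δ x p1)
      (((-4*δ/q1^3 - 2*q1 : ℝ) : ℂ) + ((-2*p1 : ℝ) : ℂ) * Complex.I) q1 := by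
  have hx : HasDerivAt (fun x : ℝ => (x:ℂ)) 1 q1 := hasDerivAt_ofReal' q1
  have hx2 : HasDerivAt (fun x : ℝ => (x:ℂ)^2) (2*(q1:ℂ)) q1 := by
    have := (hasDerivAt_pow 2 ((q1:ℝ):ℂ)).comp q1 hx
    simp at this
    exact this
  have hq1c : ((q1:ℂ))^2 ≠ 0 := pow_ne_zero _ (Complex.ofReal_ne_zero.mpr hq1)
  have hinv : HasDerivAt (fun x : ℝ => ((x:ℂ)^2)⁻¹) (-(((q1:ℂ)^2)^2)⁻¹ * (2*(q1:ℂ))) q1 := by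
    have := (hasDerivAt_inv hq1c).comp q1 hx2
    simp only [neg_mul] at this ⊢
    exact this
  have h1 := hinv.const_mul (2*δ:ℂ)
  have h2 : HasDerivAt (fun x : ℝ => 2*Complex.I*(x:ℂ)*(p1:ℂ)) (2*Complex.I*(p1:ℂ)) q1 := by
    simpa [mul_comm, mul_assoc] using (hx.const_mul (2*Complex.I)).mul_const (p1:ℂ)
  have heq : (fun x : ℝ => holtW δ x p1)
      = fun x : ℝ => ((2*δ:ℂ) * ((x:ℂ)^2)⁻¹ - 2*Complex.I*(x:ℂ)*(p1:ℂ) + (p1:ℂ)^2) - (x:ℂ)^2 := by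
    funext x; unfold holtW; push_cast; ring
  rw [heq]
  have h := ((h1.sub h2).add_const ((p1:ℂ)^2)).sub hx2
  refine h.congr_deriv ?_
  have hc : (q1:ℂ) ≠ 0 := Complex.ofReal_ne_zero.mpr hq1
  push_cast
  field_simp
  ring

lemma holtW_hasDerivAt_p (δ q1 : ℝ) (p1 : ℝ) :
    HasDerivAt (fun x : ℝ => holtW δ q1 x)
      (((2*p1 : ℝ) : ℂ) + ((-2*q1 : ℝ) : ℂ) * Complex.I) p1 := by
  have hx : HasDerivAt (fun x : ℝ => (x:ℂ)) 1 p1 := hasDerivAt_ofReal' p1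
  have hx2 : HasDerivAt (fun x : ℝ => (x:ℂ)^2) (2*(p1:ℂ)) p1 := by
    have := (hasDerivAt_pow 2 ((p1:ℝ):ℂ)).comp p1 hx
    simp at this
    exact this
  have h2 : HasDerivAt (fun x : ℝ => 2*Complex.I*(q1:ℂ)*(x:ℂ)) (2*Complex.I*(q1:ℂ)) p1 := by
    simpa using hx.const_mul (2*Complex.I*(q1:ℂ))
  have heq : (fun x : ℝ => holtW δ q1 x)
      = fun x : ℝ => (((2*δ/q1^2 : ℝ):ℂ) - 2*Complex.I*(q1:ℂ)*(x:ℂ) + (x:ℂ)^2) - ((q1:ℂ))^2 := by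
    funext x; unfold holtW; push_cast; ring
  rw [heq]
  have h := (((h2.const_sub ((2*δ/q1^2 : ℝ):ℂ)).add hx2).sub_const (((q1:ℂ))^2))
  refine h.congr_deriv ?_
  push_cast
  ring

lemma holtW_eq' (δ q1 p1 : ℝ) : holtW δ q1 p1
    = ((2*δ/q1^2 + p1^2 - q1^2 : ℝ) : ℂ) + ((-(2*q1*p1) : ℝ) : ℂ) * Complex.I := by
  unfold holtW; push_cast; ring

lemma reim_of (a b : ℝ) : (((a : ℝ) : ℂ) + ((b : ℝ) : ℂ) * Complex.I).re = a
    ∧ (((a : ℝ) : ℂ) + ((b : ℝ) : ℂ) * Complex.I).im = b := by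
  constructor <;>
    simp only [Complex.add_re, Complex.add_im, Complex.mul_re, Complex.mul_im,
      Complex.ofReal_re, Complex.ofReal_im, Complex.I_re, Complex.I_im] <;> ring

lemma holtW_re (δ q1 p1 : ℝ) : (holtW δ q1 p1).re = 2*δ/q1^2 + p1^2 - q1^2 := by
  rw [holtW_eq']; exact (reim_of _ _).1

lemma holtW_im (δ q1 p1 : ℝ) : (holtW δ q1 p1).im = -(2*q1*p1) := by
  rw [holtW_eq']; exact (reim_of _ _).2

end HoltAux

set_option maxHeartbeats 2000000 in
theorem holt_potential_theta_conserved
    (δ : ℝ) (hδ : 0 < δ)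
    (H ΘRe ΘIm : ℝ → ℝ → ℝ → ℝ → ℝ)
    (hH : H = fun q1 q2 p1 p2 =>
      (p1 ^ 2 + p2 ^ 2) / 2 + (q1 ^ 2 + 4 * q2 ^ 2) / 2 + δ / q1 ^ 2)
    (hΘRe : ΘRe = fun q1 q2 p1 p2 =>
      -(1 / 2) * Complex.arg (holtW δ q1 p1) - (1 / 2) * Real.arctan (2 * q2 / p2))
    (hΘIm : ΘIm = fun q1 q2 p1 p2 =>
      (1 / 2) * Real.log ‖holtW δ q1 p1‖) :
    ∀ q1 q2 p1 p2 : ℝ, q1 ≠ 0 → p2 ≠ 0 →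
      (0 < (holtW δ q1 p1).re ∨ (holtW δ q1 p1).im ≠ 0) →
      poissonBracket ΘRe H q1 q2 p1 p2 = 0 ∧
      poissonBracket ΘIm H q1 q2 p1 p2 = 0 := by
  subst hH hΘRe hΘIm
  intro q1 q2 p1 p2 hq1 hp2 hslit
  have hmem : holtW δ q1 p1 ∈ Complex.slitPlane := hslit
  have hw0 : holtW δ q1 p1 ≠ 0 := Complex.slitPlane_ne_zero hmem
  set fd : ℂ := ((-4*δ/q1^3 - 2*q1 : ℝ) : ℂ) + ((-2*p1 : ℝ) : ℂ) * Complex.I with hfd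
  set gd : ℂ := ((2*p1 : ℝ) : ℂ) + ((-2*q1 : ℝ) : ℂ) * Complex.I with hgd
  -- complex log derivatives
  have hlogq : HasDerivAt (fun x : ℝ => Complex.log (holtW δ x p1))
      ((holtW δ q1 p1)⁻¹ * fd) q1 :=
    by exact (Complex.hasDerivAt_log hmem).comp q1 (holtW_hasDerivAt_q δ p1 hq1)
  have hlogp : HasDerivAt (fun x : ℝ => Complex.log (holtW δ q1 x))
      ((holtW δ q1 p1)⁻¹ * gd) p1 :=
    by exact (Complex.hasDerivAt_log hmem).comp p1 (holtW_hasDerivAt_p δ q1 p1)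
  have hargq : HasDerivAt (fun x : ℝ => Complex.arg (holtW δ x p1))
      ((holtW δ q1 p1)⁻¹ * fd).im q1 := by
    have := Complex.imCLM.hasFDerivAt.comp_hasDerivAt q1 hlogq
    simpa [Function.comp_def, Complex.log_im] using this
  have hargp : HasDerivAt (fun x : ℝ => Complex.arg (holtW δ q1 x))
      ((holtW δ q1 p1)⁻¹ * gd).im p1 := by
    have := Complex.imCLM.hasFDerivAt.comp_hasDerivAt p1 hlogp
    simpa [Function.comp_def, Complex.log_im] using this
  have habsq : HasDerivAt (fun x : ℝ => Real.log ‖holtW δ x p1‖)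
      ((holtW δ q1 p1)⁻¹ * fd).re q1 := by
    have := Complex.reCLM.hasFDerivAt.comp_hasDerivAt q1 hlogq
    simpa [Function.comp_def, Complex.log_re] using this
  have habsp : HasDerivAt (fun x : ℝ => Real.log ‖holtW δ q1 x‖)
      ((holtW δ q1 p1)⁻¹ * gd).re p1 := by
    have := Complex.reCLM.hasFDerivAt.comp_hasDerivAt p1 hlogp
    simpa [Function.comp_def, Complex.log_re] using this
  -- Θ derivatives
  have A1 : HasDerivAt (fun x : ℝ => -(1/2) * Complex.arg (holtW δ x p1)
      - (1/2) * Real.arctan (2*q2/p2)) (-(1/2) * ((holtW δ q1 p1)⁻¹ * fd).im) q1 :=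
    (hargq.const_mul (-(1/2))).sub_const _
  have A2 : HasDerivAt (fun x : ℝ => -(1/2) * Complex.arg (holtW δ q1 x)
      - (1/2) * Real.arctan (2*q2/p2)) (-(1/2) * ((holtW δ q1 p1)⁻¹ * gd).im) p1 :=
    (hargp.const_mul (-(1/2))).sub_const _
  have hD : p2^2 + 4*q2^2 ≠ 0 := by positivity
  have harc0 : (1:ℝ) + (2*q2/p2)^2 ≠ 0 := by positivity
  have hinq2 : HasDerivAt (fun x : ℝ => 2*x/p2) (2*1/p2) q2 :=
    ((hasDerivAt_id q2).const_mul 2).div_const p2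
  have A3 : HasDerivAt (fun x : ℝ => -(1/2) * Complex.arg (holtW δ q1 p1)
      - (1/2) * Real.arctan (2*x/p2)) (-(p2/(p2^2+4*q2^2))) q2 := by
    have h := HasDerivAt.const_sub (-(1/2) * Complex.arg (holtW δ q1 p1))
      (((Real.hasDerivAt_arctan (2*q2/p2)).comp q2 hinq2).const_mul (1/2))
    refine h.congr_deriv ?_
    field_simp
    ring
  have hinp2 : HasDerivAt (fun x : ℝ => 2*q2/x) ((0*p2 - 2*q2*1)/p2^2) p2 :=
    (hasDerivAt_const p2 (2*q2)).div (hasDerivAt_id p2) hp2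
  have A4 : HasDerivAt (fun x : ℝ => -(1/2) * Complex.arg (holtW δ q1 p1)
      - (1/2) * Real.arctan (2*q2/x)) (q2/(p2^2+4*q2^2)) p2 := by
    have h := HasDerivAt.const_sub (-(1/2) * Complex.arg (holtW δ q1 p1))
      (((Real.hasDerivAt_arctan (2*q2/p2)).comp p2 hinp2).const_mul (1/2))
    refine h.congr_deriv ?_
    field_simp
    ring
  have B1 : HasDerivAt (fun x : ℝ => (1/2) * Real.log ‖holtW δ x p1‖)
      ((1/2) * ((holtW δ q1 p1)⁻¹ * fd).re) q1 := habsq.const_mul (1/2)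
  have B2 : HasDerivAt (fun x : ℝ => (1/2) * Real.log ‖holtW δ q1 x‖)
      ((1/2) * ((holtW δ q1 p1)⁻¹ * gd).re) p1 := habsp.const_mul (1/2)
  -- H derivatives
  have Hq1 : HasDerivAt (fun x : ℝ => (p1^2+p2^2)/2 + (x^2+4*q2^2)/2 + δ/x^2)
      (q1 - 2*δ/q1^3) q1 := by
    have h := ((((hasDerivAt_pow 2 q1).add_const (4*q2^2)).div_const 2).const_add
        ((p1^2+p2^2)/2)).add
      ((hasDerivAt_const q1 δ).div (hasDerivAt_pow 2 q1) (pow_ne_zero 2 hq1))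
    refine h.congr_deriv ?_
    field_simp
    ring
  have Hp1 : HasDerivAt (fun x : ℝ => (x^2+p2^2)/2 + (q1^2+4*q2^2)/2 + δ/q1^2) p1 p1 := by
    have h := (((((hasDerivAt_pow 2 p1).add_const (p2^2)).div_const 2).add_const
      ((q1^2+4*q2^2)/2)).add_const (δ/q1^2))
    refine h.congr_deriv ?_
    norm_num
  have Hq2 : HasDerivAt (fun x : ℝ => (p1^2+p2^2)/2 + (q1^2+4*x^2)/2 + δ/q1^2)
      (4*q2) q2 := by
    have h := (((((hasDerivAt_pow 2 q2).const_mul 4).const_add (q1^2)).div_const 2).const_add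
      ((p1^2+p2^2)/2)).add_const (δ/q1^2)
    refine h.congr_deriv ?_
    norm_num
    ring
  have Hp2 : HasDerivAt (fun x : ℝ => (p1^2+x^2)/2 + (q1^2+4*q2^2)/2 + δ/q1^2) p2 p2 := by
    have h := ((((hasDerivAt_pow 2 p2).const_add (p1^2)).div_const 2).add_const
      ((q1^2+4*q2^2)/2)).add_const (δ/q1^2)
    refine h.congr_deriv ?_
    norm_num
  -- the algebra
  have hB : -(p2/(p2^2+4*q2^2))*p2 - q2/(p2^2+4*q2^2)*(4*q2) = -1 := by
    field_simp
    ring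
  constructor
  · simp only [poissonBracket]
    rw [A1.deriv, A2.deriv, A3.deriv, A4.deriv, Hq1.deriv, Hp1.deriv, Hq2.deriv, Hp2.deriv]
    simp only [hfd, hgd, inv_mul_eq_div, Complex.div_im]
    rw [(reim_of (-4*δ/q1^3 - 2*q1) (-2*p1)).1, (reim_of (-4*δ/q1^3 - 2*q1) (-2*p1)).2,
      (reim_of (2*p1) (-2*q1)).1, (reim_of (2*p1) (-2*q1)).2]
    set u := (holtW δ q1 p1).re with hu
    set v := (holtW δ q1 p1).im with hv
    set N := Complex.normSq (holtW δ q1 p1) with hN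
    have hu2 : u = 2*δ/q1^2 + p1^2 - q1^2 := by rw [hu]; exact holtW_re δ q1 p1
    have hv2 : v = -(2*q1*p1) := by rw [hv]; exact holtW_im δ q1 p1
    have hN2 : N = u*u + v*v := by rw [hN, hu, hv, Complex.normSq_apply]
    have hN0 : N ≠ 0 := by rw [hN]; exact (Complex.normSq_pos.mpr hw0).ne'
    have key : (((-2*p1)*u - (-4*δ/q1^3 - 2*q1)*v)*p1
        - ((-2*q1)*u - (2*p1)*v)*(q1 - 2*δ/q1^3)) = -2*N := by
      rw [hN2, hu2, hv2]
      field_simp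
      ring
    have key2 : (((-2*p1)*u - (-4*δ/q1^3 - 2*q1)*v)*p1
        - ((-2*q1)*u - (2*p1)*v)*(q1 - 2*δ/q1^3))/N = -2 := by
      rw [key]
      field_simp
    linear_combination (-(1/2:ℝ)) * key2 + hB
  · simp only [poissonBracket]
    rw [B1.deriv, B2.deriv, Hq1.deriv, Hp1.deriv, Hq2.deriv, Hp2.deriv,
      deriv_const, deriv_const]
    simp only [hfd, hgd, inv_mul_eq_div, Complex.div_re]
    rw [(reim_of (-4*δ/q1^3 - 2*q1) (-2*p1)).1, (reim_of (-4*δ/q1^3 - 2*q1) (-2*p1)).2,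
      (reim_of (2*p1) (-2*q1)).1, (reim_of (2*p1) (-2*q1)).2]
    set u := (holtW δ q1 p1).re with hu
    set v := (holtW δ q1 p1).im with hv
    set N := Complex.normSq (holtW δ q1 p1) with hN
    have hu2 : u = 2*δ/q1^2 + p1^2 - q1^2 := by rw [hu]; exact holtW_re δ q1 p1
    have hv2 : v = -(2*q1*p1) := by rw [hv]; exact holtW_im δ q1 p1
    have hN0 : N ≠ 0 := by rw [hN]; exact (Complex.normSq_pos.mpr hw0).ne'
    have keynum : (((-4*δ/q1^3 - 2*q1)*u + (-2*p1)*v)*p1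
        - ((2*p1)*u + (-2*q1)*v)*(q1 - 2*δ/q1^3)) = 0 := by
      rw [hu2, hv2]
      field_simp
      ring
    have key2 : (((-4*δ/q1^3 - 2*q1)*u + (-2*p1)*v)*p1
        - ((2*p1)*u + (-2*q1)*v)*(q1 - 2*δ/q1^3))/N = 0 := by
      rw [keynum, zero_div]
    linear_combination ((1/2:ℝ)) * key2
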